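/- Under the hypotheses of the stochastic Lyapunov inequality A_cl Q A_clᵀ + F̃ F̃ᵀ ⪯ Q and initial condition E[E(0) E(0)ᵀ] ⪯ Q, the expected output deviation is uniformly bounded: for all t, E[‖M E(t)‖] ≤ sqrt(trace(M Q Mᵀ)) for any matrix M of compatible dimensions. -/

import Mathlib

open Matrix MeasureTheory ProbabilityTheory

/-- Loewner order: `A ⪯ B` iff `B - A` is positive semidefinite. -/
def LoewnerLE {N : ℕ} (A B : Matrix (Fin N) (Fin N) ℝ) : Prop := (B - A).PosSemidef

/-- Product of two real `L²` functions is integrable (via polarization). -/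
lemma integrable_mul_of_memL2 {Ω : Type*} [MeasurableSpace Ω] {μ : Measure Ω}
    {f g : Ω → ℝ} (hf : MemLp f 2 μ) (hg : MemLp g 2 μ) :
    Integrable (fun ω => f ω * g ω) μ := by
  have h := (((hf.add hg).integrable_sq.sub hf.integrable_sq).sub hg.integrable_sq).div_const 2
  have heq : (fun ω => f ω * g ω)
      = fun ω => (((f ω + g ω) ^ 2 - f ω ^ 2) - g ω ^ 2) / 2 := by
    funext ω; ring
  rw [heq]; exact h

/-- Cauchy–Schwarz / Jensen: square of integral is at most integral of square. -/
lemma sq_integral_le_integral_sq {Ω : Type*} [MeasurableSpace Ω] {μ : Measure Ω}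
    [IsProbabilityMeasure μ] {X : Ω → ℝ} (hX : MemLp X 2 μ) :
    (∫ ω, X ω ∂μ) ^ 2 ≤ ∫ ω, X ω ^ 2 ∂μ := by
  have h := variance_nonneg X μ
  rw [variance_eq_sub hX] at h
  have : (∫ ω, (X ^ 2) ω ∂μ) = ∫ ω, X ω ^ 2 ∂μ := by simp
  simp only [this] at h
  linarith

/-- Second moment of a linear functional of a random vector. -/
lemma integral_dot_sq {n : ℕ} {Ω : Type*} [MeasurableSpace Ω] {μ : Measure Ω}
    (X : Ω → Fin n → ℝ) (hX : ∀ i, MemLp (fun ω => X ω i) 2 μ) (v : Fin n → ℝ) :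
    ∫ ω, (v ⬝ᵥ X ω) ^ 2 ∂μ = ∑ i, ∑ j, v i * v j * ∫ ω, X ω i * X ω j ∂μ := by
  have hij : ∀ i j : Fin n, Integrable (fun ω => v i * v j * (X ω i * X ω j)) μ :=
    fun i j => (integrable_mul_of_memL2 (hX i) (hX j)).const_mul (v i * v j)
  have h1 : ∀ ω, (v ⬝ᵥ X ω) ^ 2 = ∑ i, ∑ j, v i * v j * (X ω i * X ω j) := by
    intro ω
    rw [sq, dotProduct, Finset.sum_mul_sum]
    exact Finset.sum_congr rfl fun i _ => Finset.sum_congr rfl fun j _ => by ring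
  simp_rw [h1]
  rw [integral_finset_sum _ fun i _ => integrable_finset_sum _ fun j _ => hij i j]
  refine Finset.sum_congr rfl fun i _ => ?_
  rw [integral_finset_sum _ fun j _ => hij i j]
  exact Finset.sum_congr rfl fun j _ => integral_const_mul _ _

theorem expected_deviation_uniformly_bounded (N d q : ℕ)
    {Ω : Type*} [MeasurableSpace Ω] (μ : Measure Ω) [IsProbabilityMeasure μ]
    (Acl : Matrix (Fin N) (Fin N) ℝ) (Ft : Matrix (Fin N) (Fin d) ℝ)
    (Q : Matrix (Fin N) (Fin N) ℝ) (hQ : Q.PosSemidef)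
    (hLyap : LoewnerLE (Acl * Q * Aclᵀ + Ft * Ftᵀ) Q)
    (E : ℕ → Ω → (Fin N → ℝ)) (W : ℕ → Ω → (Fin d → ℝ))
    (hEmeas : ∀ t, Measurable (E t)) (hWmeas : ∀ t, Measurable (W t))
    (hE2 : ∀ t i, MemLp (fun ω => E t ω i) 2 μ)
    (hW2 : ∀ t i, MemLp (fun ω => W t ω i) 2 μ)
    (hindep : ∀ t, IndepFun (E t) (W t) μ)
    (hWmean : ∀ t i, (∫ ω, W t ω i ∂μ) = 0)
    (hWcov : ∀ t i j, (∫ ω, W t ω i * W t ω j ∂μ) = (1 : Matrix (Fin d) (Fin d) ℝ) i j)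
    (hdyn : ∀ t ω, E (t + 1) ω = Acl.mulVec (E t ω) + Ft.mulVec (W t ω))
    (hInit : LoewnerLE (Matrix.of fun i j => ∫ ω, E 0 ω i * E 0 ω j ∂μ) Q)
    (M : Matrix (Fin q) (Fin N) ℝ) :
    ∀ t, (∫ ω, Real.sqrt (∑ i, (M.mulVec (E t ω)) i ^ 2) ∂μ) ≤
      Real.sqrt (Matrix.trace (M * Q * Mᵀ)) := by
  classical
  -- dot products with E t are in L²
  have hdotE : ∀ t (v : Fin N → ℝ), MemLp (fun ω => v ⬝ᵥ E t ω) 2 μ := by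
    intro t v
    have heq : (fun ω => v ⬝ᵥ E t ω) = fun ω => ∑ i, v i * E t ω i := by
      funext ω; simp [dotProduct]
    rw [heq]
    exact memLp_finset_sum Finset.univ fun i _ => (hE2 t i).const_mul (v i)
  have hdotW : ∀ t (v : Fin d → ℝ), MemLp (fun ω => v ⬝ᵥ W t ω) 2 μ := by
    intro t v
    have heq : (fun ω => v ⬝ᵥ W t ω) = fun ω => ∑ i, v i * W t ω i := by
      funext ω; simp [dotProduct]
    rw [heq]
    exact memLp_finset_sum Finset.univ fun i _ => (hW2 t i).const_mul (v i)
  -- the key covariance bound by induction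
  have hcov : ∀ t (v : Fin N → ℝ), ∫ ω, (v ⬝ᵥ E t ω) ^ 2 ∂μ ≤ v ⬝ᵥ Q.mulVec v := by
    intro t
    induction t with
    | zero =>
      intro v
      rw [integral_dot_sq (E 0) (hE2 0) v]
      have h := hInit.dotProduct_mulVec_nonneg v
      simp only [star_trivial, Matrix.sub_mulVec, dotProduct_sub] at h
      have heq : v ⬝ᵥ (Matrix.of fun i j => ∫ ω, E 0 ω i * E 0 ω j ∂μ).mulVec v
          = ∑ i, ∑ j, v i * v j * ∫ ω, E 0 ω i * E 0 ω j ∂μ := by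
        simp only [dotProduct, Matrix.mulVec, Matrix.of_apply, Finset.mul_sum]
        exact Finset.sum_congr rfl fun i _ => Finset.sum_congr rfl fun j _ => by ring
      rw [heq] at h
      linarith
    | succ t ih =>
      intro v
      set a : Fin N → ℝ := Matrix.vecMul v Acl with ha
      set b : Fin d → ℝ := Matrix.vecMul v Ft with hb
      have hEt1 : ∀ ω, v ⬝ᵥ E (t + 1) ω = a ⬝ᵥ E t ω + b ⬝ᵥ W t ω := by
        intro ω
        rw [hdyn t ω, dotProduct_add, dotProduct_mulVec,
          dotProduct_mulVec]
      set X : Ω → ℝ := fun ω => a ⬝ᵥ E t ω with hXdef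
      set Y : Ω → ℝ := fun ω => b ⬝ᵥ W t ω with hYdef
      have hX2 : MemLp X 2 μ := hdotE t a
      have hY2 : MemLp Y 2 μ := hdotW t b
      -- independence of X and Y
      have hmeasdot : ∀ (n : ℕ) (c : Fin n → ℝ), Measurable (fun x : Fin n → ℝ => c ⬝ᵥ x) := by
        intro n c
        simp only [dotProduct]
        exact Finset.measurable_sum _ fun i _ => by fun_prop
      have hXY : IndepFun X Y μ := (hindep t).comp (hmeasdot N a) (hmeasdot d b)
      -- expectation of Y is zero
      have hY0 : ∫ ω, Y ω ∂μ = 0 := by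
        simp only [hYdef, dotProduct]
        rw [integral_finset_sum _ fun i _ => ((hW2 t i).integrable one_le_two).const_mul (b i)]
        simp [integral_const_mul, hWmean t]
      -- cross term vanishes
      have hcross : ∫ ω, X ω * Y ω ∂μ = 0 := by
        have h := hXY.integral_mul_eq_mul_integral (hX2.integrable one_le_two).1
          (hY2.integrable one_le_two).1
        have h' : (∫ ω, X ω * Y ω ∂μ) = ∫ ω, (X * Y) ω ∂μ := rfl
        rw [h', h, hY0, mul_zero]
      -- second moment of Y
      have hYsq : ∫ ω, Y ω ^ 2 ∂μ = b ⬝ᵥ b := by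
        rw [hYdef]
        rw [integral_dot_sq (W t) (hW2 t) b]
        simp_rw [hWcov t, Matrix.one_apply, mul_ite, mul_one, mul_zero]
        simp [dotProduct, sq]
      -- expand the square
      have hexpand : ∫ ω, (v ⬝ᵥ E (t + 1) ω) ^ 2 ∂μ
          = (∫ ω, X ω ^ 2 ∂μ) + 2 * (∫ ω, X ω * Y ω ∂μ) + ∫ ω, Y ω ^ 2 ∂μ := by
        have h1 : ∀ ω, (v ⬝ᵥ E (t + 1) ω) ^ 2 = X ω ^ 2 + 2 * (X ω * Y ω) + Y ω ^ 2 := by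
          intro ω; rw [hEt1 ω]; ring
        simp_rw [h1]
        rw [integral_add (by
            exact (hX2.integrable_sq.add ((integrable_mul_of_memL2 hX2 hY2).const_mul 2)))
          hY2.integrable_sq,
          integral_add hX2.integrable_sq ((integrable_mul_of_memL2 hX2 hY2).const_mul 2),
          integral_const_mul]
      -- quadratic form identity
      have h1 : v ⬝ᵥ ((Acl * Q * Aclᵀ).mulVec v) = a ⬝ᵥ Q.mulVec a := by
        rw [← Matrix.mulVec_mulVec, ← Matrix.mulVec_mulVec, Matrix.mulVec_transpose,
          dotProduct_mulVec, ha]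
      have h2 : v ⬝ᵥ ((Ft * Ftᵀ).mulVec v) = b ⬝ᵥ b := by
        rw [← Matrix.mulVec_mulVec, Matrix.mulVec_transpose, dotProduct_mulVec, hb]
      have hquad : a ⬝ᵥ Q.mulVec a + b ⬝ᵥ b
          = v ⬝ᵥ ((Acl * Q * Aclᵀ + Ft * Ftᵀ).mulVec v) := by
        rw [Matrix.add_mulVec, dotProduct_add, h1, h2]
      -- Lyapunov inequality as a quadratic form
      have hLy := hLyap.dotProduct_mulVec_nonneg v
      simp only [star_trivial, Matrix.sub_mulVec, dotProduct_sub] at hLy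
      have hih := ih a
      rw [hexpand, hcross, hYsq, mul_zero, add_zero]
      linarith [hquad ▸ (add_le_add_left hih (b ⬝ᵥ b))]
  -- final bound
  intro t
  have hrow : ∀ ω, (∑ i, (M.mulVec (E t ω)) i ^ 2) = ∑ i, ((M i) ⬝ᵥ E t ω) ^ 2 := by
    intro ω; rfl
  set f : Ω → ℝ := fun ω => ∑ i, ((M i) ⬝ᵥ E t ω) ^ 2 with hfdef
  set g : Ω → ℝ := fun ω => Real.sqrt (f ω) with hgdef
  have hf_nonneg : ∀ ω, 0 ≤ f ω := fun ω => Finset.sum_nonneg fun i _ => sq_nonneg _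
  have hfint : Integrable f μ :=
    integrable_finset_sum _ fun i _ => (hdotE t (M i)).integrable_sq
  have hgmeas : Measurable g := by
    apply Real.continuous_sqrt.measurable.comp
    apply Finset.measurable_sum
    intro i _
    have : Measurable (fun ω => (M i) ⬝ᵥ E t ω) := by
      simp only [dotProduct]
      exact Finset.measurable_sum _ fun j _ =>
        ((measurable_pi_apply j).comp (hEmeas t)).const_mul (M i j)
    exact this.pow_const 2
  have hg_sq : ∀ ω, g ω ^ 2 = f ω := fun ω => Real.sq_sqrt (hf_nonneg ω)
  have hg2 : MemLp g 2 μ := by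
    rw [memLp_two_iff_integrable_sq hgmeas.aestronglyMeasurable]
    simpa only [hg_sq] using hfint
  -- integral of f is bounded by the trace
  have hfbound : ∫ ω, f ω ∂μ ≤ Matrix.trace (M * Q * Mᵀ) := by
    rw [hfdef]
    simp only
    rw [integral_finset_sum _ fun i _ => (hdotE t (M i)).integrable_sq]
    have htr : Matrix.trace (M * Q * Mᵀ) = ∑ i, (M i) ⬝ᵥ Q.mulVec (M i) := by
      simp only [Matrix.trace, Matrix.diag, Matrix.mul_apply, Matrix.transpose_apply,
        dotProduct, Matrix.mulVec, Finset.mul_sum, Finset.sum_mul]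
      refine Finset.sum_congr rfl fun i _ => ?_
      rw [Finset.sum_comm]
      exact Finset.sum_congr rfl fun k _ => Finset.sum_congr rfl fun j _ => by ring
    rw [htr]
    exact Finset.sum_le_sum fun i _ => hcov t (M i)
  -- put everything together
  have hgint : (∫ ω, g ω ∂μ) ≤ Real.sqrt (Matrix.trace (M * Q * Mᵀ)) := by
    have h0 : 0 ≤ ∫ ω, g ω ∂μ := integral_nonneg fun ω => Real.sqrt_nonneg _
    have h1 : (∫ ω, g ω ∂μ) ^ 2 ≤ ∫ ω, g ω ^ 2 ∂μ := sq_integral_le_integral_sq hg2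
    have h2 : (∫ ω, g ω ^ 2 ∂μ) = ∫ ω, f ω ∂μ := by simp_rw [hg_sq]
    calc (∫ ω, g ω ∂μ) = Real.sqrt ((∫ ω, g ω ∂μ) ^ 2) := (Real.sqrt_sq h0).symm
      _ ≤ Real.sqrt (Matrix.trace (M * Q * Mᵀ)) := by
          apply Real.sqrt_le_sqrt
          rw [h2] at h1
          linarith [hfbound]
  calc (∫ ω, Real.sqrt (∑ i, (M.mulVec (E t ω)) i ^ 2) ∂μ)
      = ∫ ω, g ω ∂μ := by simp_rw [hgdef, hfdef, hrow]
    _ ≤ Real.sqrt (Matrix.trace (M * Q * Mᵀ)) := hgint
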